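/- Let P be a hereditary graph property not containing all graphs, let G ∈ M*(P) and H ∈ P with G a subgraph of H. Then dc(H) ≤ dc(G). Moreover, if dc(H) = dc(G) = n, with G = G₁+⋯+G_n and H = H₁+⋯+H_n the respective expressions as joins of ind-parts, then the ind-parts of H can be relabelled so that Gᵢ is an induced subgraph of Hᵢ for each i. -/

import Mathlib

attribute [local instance] Classical.propDecidable

open SimpleGraph

/-- A finite simple graph, bundled. -/
structure FGraph : Type 1 where
  V : Type
  [fin : Fintype V]
  graph : SimpleGraph V

attribute [instance] FGraph.fin

namespace FGraph

/-- `G.IsInduced H` : `G` is isomorphic to an induced subgraph of `H`. -/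
def IsInduced (G H : FGraph) : Prop := Nonempty (G.graph ↪g H.graph)

/-- `G.IsSub H` : `G` is isomorphic to a subgraph of `H`. -/
def IsSub (G H : FGraph) : Prop := ∃ f : G.graph →g H.graph, Function.Injective f

/-- `G.Iso H` : `G` and `H` are isomorphic. -/
def Iso (G H : FGraph) : Prop := Nonempty (G.graph ≃g H.graph)

/-- The induced subgraph of `G` on a set `s` of vertices. -/
noncomputable def induce (G : FGraph) (s : Set G.V) : FGraph := ⟨↥s, G.graph.induce s⟩

end FGraph

/-- A class of finite graphs. -/
abbrev GProp : Type 1 := FGraph → Prop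

/-- A graph property: a nonempty isomorphism-closed class of finite graphs,
each having at least one vertex. -/
structure IsGProp (P : GProp) : Prop where
  nonempty : ∃ G, P G
  vertexNonempty : ∀ G, P G → Nonempty G.V
  isoClosed : ∀ G H, G.Iso H → P G → P H

namespace GProp

/-- The product `P ∘ Q` of two classes of graphs. -/
def prod (P Q : GProp) : GProp := fun G =>
  Nonempty G.V ∧ ∃ s : Set G.V,
    (s.Nonempty → P (G.induce s)) ∧ ((sᶜ : Set G.V).Nonempty → Q (G.induce (sᶜ : Set G.V)))

/-- The product `∏ i, Ps i` of an indexed family of classes of graphs: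
the vertex set is partitioned into the (possibly empty) preimages of a map
to the index set, and every nonempty part must induce a graph in the
corresponding class. -/
def iProd {I : Type*} (Ps : I → GProp) : GProp := fun G =>
  Nonempty G.V ∧ ∃ f : G.V → I,
    ∀ i, (f ⁻¹' {i}).Nonempty → Ps i (G.induce (f ⁻¹' {i}))

end GProp

/-- Closed under induced subgraphs with at least one vertex. -/
def IndHereditary (P : GProp) : Prop :=
  ∀ G H : FGraph, P G → H.IsInduced G → Nonempty H.V → P H

/-- Closed under subgraphs with at least one vertex. -/
def Hereditary (P : GProp) : Prop :=
  ∀ G H : FGraph, P G → H.IsSub G → Nonempty H.V → P H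

/-- Closed under induced supergraphs. -/
def GeqHereditary (P : GProp) : Prop :=
  ∀ G H : FGraph, P H → H.IsInduced G → P G


/-- `H + e`: the graph obtained from `H` by adding the edge `{a, b}`. -/
def addEdge (H : FGraph) (a b : H.V) : FGraph :=
  ⟨H.V, H.graph ⊔ SimpleGraph.fromEdgeSet {s(a, b)}⟩

/-- `G` is `P`-maximal: `G ∈ P` but adding any edge of the complement of `G`
leaves `P`. -/
def PMaximal (P : GProp) (G : FGraph) : Prop :=
  P G ∧ ∀ a b : G.V, a ≠ b → ¬ G.graph.Adj a b → ¬ P (addEdge G a b)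

/-- `c(P)`: the largest `r` such that the complete graph `K_r` belongs to `P`. -/
noncomputable def cNum (P : GProp) : ℕ :=
  sSup {r : ℕ | P ⟨Fin r, (⊤ : SimpleGraph (Fin r))⟩}

/-- `G ∈ M*(P)`: `G` is `P`-maximal with at least `c(P)` vertices. -/
def PMaxStar (P : GProp) (G : FGraph) : Prop :=
  PMaximal P G ∧ cNum P ≤ Fintype.card G.V

/-- `dc(G)`: the number of ind-parts of `G`, i.e. the number of connected
components of the complement of `G`.  The ind-parts themselves are the
subgraphs induced on the supports of these components. -/
noncomputable def dc (G : FGraph) : ℕ := Fintype.card (G.graphᶜ.ConnectedComponent)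

/-- if `P` is a hereditary graph property not containing all
graphs, `G ∈ M*(P)`, `H ∈ P` and `G` is a subgraph of `H`, then
`dc(H) ≤ dc(G)`; and if `dc(H) = dc(G)`, the ind-parts of `H` (indexed by the
connected components of `Hᶜ`) can be relabelled by the ind-parts of `G` so
that each ind-part of `G` is an induced subgraph of the corresponding
ind-part of `H`. -/
theorem statement_15 (P : GProp) (hP : IsGProp P) (hher : Hereditary P)
    (hnotall : ¬ ∀ G : FGraph, Nonempty G.V → P G)
    (G H : FGraph) (hG : PMaxStar P G) (hH : P H) (hsub : G.IsSub H) :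
    dc H ≤ dc G ∧
    (dc H = dc G →
      ∃ ψ : (G.graphᶜ.ConnectedComponent) ≃ (H.graphᶜ.ConnectedComponent),
        ∀ c : G.graphᶜ.ConnectedComponent,
          Nonempty ((G.graph.induce c.supp) ↪g (H.graph.induce (ψ c).supp))) := by
  
  classical
  obtain ⟨f, hfinj⟩ := hsub
  have hGP : P G := hG.1.1
  have hGne : Nonempty G.V := hP.vertexNonempty G hGP
  -- the set of r with K_r ∈ P is bounded above
  have hbdd : BddAbove {r : ℕ | P ⟨Fin r, (⊤ : SimpleGraph (Fin r))⟩} := by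
    push_neg at hnotall
    obtain ⟨F, hFne, hF⟩ := hnotall
    refine ⟨Fintype.card F.V, fun r hr => ?_⟩
    by_contra hle
    push_neg at hle
    apply hF
    have hcard : Fintype.card F.V ≤ Fintype.card (Fin r) := by
      simpa using hle.le
    obtain ⟨e⟩ := Function.Embedding.nonempty_of_card_le hcard
    refine hher ⟨Fin r, ⊤⟩ F hr ⟨⟨(e : F.V → Fin r), ?_⟩, e.injective⟩ hFne
    intro a b hab
    exact fun h => hab.ne (e.injective h)
  have hKc1 : ¬ P ⟨Fin (cNum P + 1), (⊤ : SimpleGraph (Fin (cNum P + 1)))⟩ := by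
    intro h
    have h2 : cNum P + 1 ≤ cNum P := le_csSup hbdd h
    omega
  -- f reflects adjacency
  have hrefl : ∀ a b : G.V, H.graph.Adj (f a) (f b) → G.graph.Adj a b := by
    intro a b hab
    by_contra hnadj
    have hne : a ≠ b := by
      rintro rfl; exact H.graph.irrefl hab
    apply hG.1.2 a b hne hnadj
    refine hher H (addEdge G a b) hH ⟨⟨(f : G.V → H.V), ?_⟩, hfinj⟩ hGne
    intro x y hxy
    change G.V at x y
    rcases hxy with h | h
    · exact f.map_rel' h
    · rw [SimpleGraph.fromEdgeSet_adj] at h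
      obtain ⟨hmem, -⟩ := h
      simp only [Set.mem_singleton_iff, Sym2.eq_iff] at hmem
      rcases hmem with ⟨hxa, hyb⟩ | ⟨hxb, hya⟩
      · rw [hxa, hyb]; exact hab
      · rw [hxb, hya]; exact hab.symm
  -- no vertex of H dominates the image of f
  have hdom : ∀ v : H.V, ¬ (∀ a : G.V, H.graph.Adj v (f a)) := by
    intro v hv
    have hvnotin : ∀ a : G.V, v ≠ f a := by
      intro a h
      exact H.graph.irrefl (h ▸ hv a)
    by_cases hcomp : ∀ a b : G.V, a ≠ b → G.graph.Adj a b
    · -- G is complete: K_{c+1} would be a subgraph of H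
      apply hKc1
      have hcard : Fintype.card (Fin (cNum P)) ≤ Fintype.card G.V := by
        simpa using hG.2
      obtain ⟨e⟩ := Function.Embedding.nonempty_of_card_le hcard
      set c := cNum P with hc
      let g : Fin (c + 1) → H.V := fun i =>
        if h : (i : ℕ) < c then f (e ⟨i, h⟩) else v
      have hginj : Function.Injective g := by
        intro i j hij
        by_cases hi : (i : ℕ) < c <;> by_cases hj : (j : ℕ) < c <;>
          simp only [g, hi, hj, dif_pos, dif_neg, not_false_iff] at hij
        · have := e.injective (hfinj hij)
          exact Fin.ext (by simpa using congrArg Fin.val this)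
        · exact absurd hij.symm (hvnotin _)
        · exact absurd hij (hvnotin _)
        · exact Fin.ext (by omega)
      refine hher H ⟨Fin (c + 1), ⊤⟩ hH ⟨⟨g, ?_⟩, hginj⟩ ⟨0⟩
      intro i j hij
      have hij' : i ≠ j := hij.ne
      by_cases hi : (i : ℕ) < c <;> by_cases hj : (j : ℕ) < c <;>
        simp only [g, hi, hj, dif_pos, dif_neg, not_false_iff]
      · refine f.map_rel' (hcomp _ _ ?_)
        intro h
        exact hij' (Fin.ext (by simpa using congrArg Fin.val (e.injective h)))
      · exact (hv _).symm
      · exact hv _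
      · exact absurd (Fin.ext (by omega) : i = j) hij'
    · -- G not complete: add a missing edge inside H using v
      push_neg at hcomp
      obtain ⟨a, b, hne, hnadj⟩ := hcomp
      apply hG.1.2 a b hne hnadj
      let g : G.V → H.V := fun x => if x = b then v else f x
      have hginj : Function.Injective g := by
        intro x y hxy
        by_cases hx : x = b <;> by_cases hy : y = b <;>
          simp only [g, hx, hy, if_pos, if_neg, not_false_iff] at hxy
        · rw [hx, hy]

        · exact absurd hxy (hvnotin _)
        · exact absurd hxy.symm (hvnotin _)
        · exact hfinj hxy
      refine hher H (addEdge G a b) hH ⟨⟨g, ?_⟩, hginj⟩ hGne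
      intro x y hxy
      change G.V at x y
      rcases hxy with h | h
      · by_cases hx : x = b <;> by_cases hy : y = b <;>
          simp only [g, hx, hy, if_pos, if_neg, not_false_iff]
        · exact absurd (hx.trans hy.symm) h.ne
        · exact hv _
        · exact (hv _).symm
        · exact f.map_rel' h
      · rw [SimpleGraph.fromEdgeSet_adj] at h
        obtain ⟨hmem, -⟩ := h
        simp only [Set.mem_singleton_iff, Sym2.eq_iff] at hmem
        rcases hmem with ⟨hxa, hyb⟩ | ⟨hxb, hya⟩
        · simp only [g, hxa, hyb, if_pos, if_neg hne]
          exact (hv _).symm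
        · simp only [g, hxb, hya, if_pos, if_neg hne]
          exact hv _
  -- f is a homomorphism of complements
  have hcadj : ∀ a b : G.V, G.graphᶜ.Adj a b → H.graphᶜ.Adj (f a) (f b) := by
    intro a b hab
    obtain ⟨hne, hnadj⟩ := hab
    exact ⟨fun h => hne (hfinj h), fun h => hnadj (hrefl a b h)⟩
  let f' : G.graphᶜ →g H.graphᶜ := ⟨(f : G.V → H.V), fun h => hcadj _ _ h⟩
  let φ : G.graphᶜ.ConnectedComponent → H.graphᶜ.ConnectedComponent :=
    SimpleGraph.ConnectedComponent.map f'
  have hsurj : Function.Surjective φ := by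
    intro d
    refine SimpleGraph.ConnectedComponent.ind (fun v => ?_) d
    by_cases hex : ∃ a : G.V,
        H.graphᶜ.connectedComponentMk (f a) = H.graphᶜ.connectedComponentMk v
    · obtain ⟨a, ha⟩ := hex
      refine ⟨G.graphᶜ.connectedComponentMk a, ?_⟩
      show (G.graphᶜ.connectedComponentMk a).map f' = _
      rw [SimpleGraph.ConnectedComponent.map_mk]
      exact ha
    · exfalso
      apply hdom v
      intro a
      push_neg at hex
      have hnr : ¬ H.graphᶜ.Reachable (f a) v := by
        intro h
        exact hex a (SimpleGraph.ConnectedComponent.sound h)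
      have hvne : v ≠ f a := by
        rintro rfl; exact hnr (SimpleGraph.Reachable.refl _)
      have hnadj : ¬ H.graphᶜ.Adj (f a) v := fun h => hnr h.reachable
      rw [SimpleGraph.compl_adj] at hnadj
      push_neg at hnadj
      exact (hnadj (Ne.symm hvne)).symm
  have h1 : dc H ≤ dc G := Fintype.card_le_of_surjective φ hsurj
  refine ⟨h1, fun heq => ?_⟩
  have hbij : Function.Bijective φ :=
    (Fintype.bijective_iff_surjective_and_card φ).2 ⟨hsurj, heq.symm⟩
  refine ⟨Equiv.ofBijective φ hbij, fun c => ?_⟩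
  have hmem : ∀ x : G.V, x ∈ c.supp → f x ∈ ((Equiv.ofBijective φ hbij) c).supp := by
    intro x hx
    rw [SimpleGraph.ConnectedComponent.mem_supp_iff] at hx ⊢
    show H.graphᶜ.connectedComponentMk (f x) = φ c
    rw [← hx]
    exact (SimpleGraph.ConnectedComponent.map_mk f' x).symm
  refine ⟨⟨⟨fun x => ⟨f x.1, hmem x.1 x.2⟩, ?_⟩, ?_⟩⟩
  · intro x y hxy
    exact Subtype.ext (hfinj (congrArg Subtype.val hxy))
  · intro x y
    simp only [SimpleGraph.comap_adj, Function.Embedding.coe_subtype]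
    exact ⟨fun h => hrefl _ _ h, fun h => f.map_rel' h⟩
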